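/- arXiv:1807.03614 — 3 statements merged into one kernel-verified Lean document; each statement's English description precedes it below -/
import Mathlib

section
/- Let d ≥ 2, let C, D ∈ C^d_* be closed convex cones of positive dimension, and let R > 0. Let B_R denote the closed ball of radius R centered at o. Then the Euclidean Hausdorff distance of the convex bodies C ∩ B_R and D ∩ B_R satisfies δ(C ∩ B_R, D ∩ B_R) ≤ R · δ_a(C,D). -/
open Set MeasureTheory
open scoped RealInnerProductSpace ENNReal NNReal

attribute [local instance] Classical.propDecidable

noncomputable section

/-- `ℝ^d` with its Euclidean structure. -/
abbrev Euc (d : ℕ) := EuclideanSpace ℝ (Fin d)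

/-- A closed convex cone (with apex `o`) in `ℝ^d`. -/
def IsClosedConvexCone {d : ℕ} (C : Set (Euc d)) : Prop :=
  C.Nonempty ∧ IsClosed C ∧ Convex ℝ C ∧ ∀ x ∈ C, ∀ r : ℝ, 0 ≤ r → r • x ∈ C

/-- A cone has positive dimension iff it contains a nonzero point. -/
def PosDim {d : ℕ} (C : Set (Euc d)) : Prop := ∃ x ∈ C, x ≠ 0

/-- The dual (polar) cone `C° = {x : ⟪x,y⟫ ≤ 0 ∀ y ∈ C}`. -/
def dualCone {d : ℕ} (C : Set (Euc d)) : Set (Euc d) :=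
  {x | ∀ y ∈ C, ⟪x, y⟫ ≤ 0}

/-- The metric projection (nearest point map) onto a set; junk value `0` if
no nearest point exists.  For a nonempty closed convex set this is the usual
(unique) nearest-point map. -/
def metricProj {d : ℕ} (C : Set (Euc d)) (x : Euc d) : Euc d :=
  if h : ∃ y ∈ C, ∀ z ∈ C, dist x y ≤ dist x z then h.choose else 0

/-- The angular distance `d_a(x, C) = arccos (‖Π_C x‖ / ‖x‖)` for `x ≠ o`,
and `d_a(o, C) = π/2`. -/
def angDist {d : ℕ} (C : Set (Euc d)) (x : Euc d) : ℝ :=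
  if x = 0 then Real.pi / 2 else Real.arccos (‖metricProj C x‖ / ‖x‖)

/-- The angular parallel set `C_λ^a = {x : d_a(x,C) ≤ λ}`. -/
def angParallel {d : ℕ} (C : Set (Euc d)) (l : ℝ) : Set (Euc d) :=
  {x | angDist C x ≤ l}

/-- The angular Hausdorff distance
`δ_a(C,D) = min {λ ≥ 0 : C ⊆ D_λ^a, D ⊆ C_λ^a}`. -/
def angHaus {d : ℕ} (C D : Set (Euc d)) : ℝ :=
  sInf {l : ℝ | 0 ≤ l ∧ C ⊆ angParallel D l ∧ D ⊆ angParallel C l}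

/-- The standard Gaussian measure `γ_d` on `ℝ^d`. -/
def stdGaussian (d : ℕ) : Measure (Euc d) :=
  volume.withDensity fun x =>
    ENNReal.ofReal ((2 * Real.pi) ^ (-(d : ℝ) / 2) * Real.exp (-‖x‖ ^ 2 / 2))

/-- The biconic σ-algebra on `ℝ^d × ℝ^d`: Borel sets invariant under
separate positive scaling of the two components. -/
def biconicMS (d : ℕ) : MeasurableSpace (Euc d × Euc d) where
  MeasurableSet' η := MeasurableSet η ∧
    ∀ p ∈ η, ∀ a b : ℝ, 0 < a → 0 < b → (a • p.1, b • p.2) ∈ η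
  measurableSet_empty := ⟨MeasurableSet.empty, fun p hp => absurd hp (notMem_empty p)⟩
  measurableSet_compl := by
    rintro η ⟨hm, hinv⟩
    refine ⟨hm.compl, ?_⟩
    rintro p hp a b ha hb hmem
    apply hp
    have h2 := hinv _ hmem a⁻¹ b⁻¹ (by positivity) (by positivity)
    simpa [smul_smul, inv_mul_cancel₀ ha.ne', inv_mul_cancel₀ hb.ne'] using h2
  measurableSet_iUnion := by
    rintro s hs
    refine ⟨MeasurableSet.iUnion fun i => (hs i).1, ?_⟩
    rintro p hp a b ha hb
    obtain ⟨i, hi⟩ := mem_iUnion.1 hp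
    exact mem_iUnion.2 ⟨i, (hs i).2 p hi a b ha hb⟩

/-- A polyhedral cone: a finite intersection of closed halfspaces with `o`
on their boundary. -/
def IsPolyhedralCone {d : ℕ} (C : Set (Euc d)) : Prop :=
  ∃ (n : ℕ) (u : Fin n → Euc d), C = {x | ∀ i, ⟪x, u i⟫ ≤ 0}

/-- A face of a cone `C`: either `C` itself or the intersection of `C` with a
supporting hyperplane of `C` through `o`. -/
def IsFaceOf {d : ℕ} (C F : Set (Euc d)) : Prop :=
  F = C ∨ ∃ u : Euc d, u ≠ 0 ∧ (∀ x ∈ C, ⟪u, x⟫ ≤ 0) ∧ F = C ∩ {x | ⟪u, x⟫ = 0}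

/-- Relative interior of a set containing `o` (relative to its linear span). -/
def relint {d : ℕ} (S : Set (Euc d)) : Set (Euc d) :=
  {x ∈ S | ∃ ε > 0, ∀ y ∈ (Submodule.span ℝ S : Set (Euc d)), dist y x < ε → y ∈ S}

/-- The `k`-skeleton of a polyhedral cone: the union of the relative interiors
of its `k`-dimensional faces. -/
def skel {d : ℕ} (C : Set (Euc d)) (k : ℕ) : Set (Euc d) :=
  ⋃ F ∈ {F | IsFaceOf C F ∧ Module.finrank ℝ (Submodule.span ℝ F) = k}, relint F

/-- The conic support measure
`Ω_k(C,η) = P{Π_C(g) ∈ skel_k C, (Π_C(g), Π_{C°}(g)) ∈ η}`. -/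
def conicSuppMeasure {d : ℕ} (C : Set (Euc d)) (k : ℕ) (η : Set (Euc d × Euc d)) : ℝ≥0∞ :=
  stdGaussian d {x | metricProj C x ∈ skel C k ∧
    (metricProj C x, metricProj (dualCone C) x) ∈ η}

/-- `φ_f(C,η) = E [f(‖Π_C g‖², ‖Π_{C°} g‖²) · 1_η (Π_C g, Π_{C°} g)]` for a
standard Gaussian vector `g`. -/
def phiF {d : ℕ} (C : Set (Euc d)) (f : ℝ → ℝ → ℝ) (η : Set (Euc d × Euc d)) : ℝ≥0∞ :=
  ∫⁻ x, ENNReal.ofReal (f (‖metricProj C x‖ ^ 2) (‖metricProj (dualCone C) x‖ ^ 2)) *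
      η.indicator (fun _ => (1 : ℝ≥0∞)) (metricProj C x, metricProj (dualCone C) x)
    ∂ stdGaussian d

/-- `ω_j = 2 π^{j/2} / Γ(j/2)`, the total spherical Lebesgue measure of `S^{j-1}`. -/
def sphVol (j : ℕ) : ℝ := 2 * Real.pi ^ ((j : ℝ) / 2) / Real.Gamma ((j : ℝ) / 2)

/-- The coefficient functions `g_k` of the conic Steiner formula:
`g_k(λ) = (ω_k ω_{d-k} / ω_d) ∫_0^λ cos^{k-1} φ sin^{d-k-1} φ dφ` for
`1 ≤ k ≤ d-1`, and `g_d ≡ 1`. -/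
def gcoef (d k : ℕ) (l : ℝ) : ℝ :=
  if k = d then 1
  else (sphVol k * sphVol (d - k) / sphVol d) *
    ∫ t in (0:ℝ)..l, Real.cos t ^ (k - 1) * Real.sin t ^ (d - k - 1)

/-- The angular local parallel set
`M_λ^a(C,η) = {x : d_a(x,C) ≤ λ, (Π_C x, Π_{C°} x) ∈ η}`. -/
def angLocParallel {d : ℕ} (C : Set (Euc d)) (l : ℝ) (η : Set (Euc d × Euc d)) : Set (Euc d) :=
  {x | angDist C x ≤ l ∧ (metricProj C x, metricProj (dualCone C) x) ∈ η}

/-- The homogeneous extension of a function on `S^{d-1} × S^{d-1}`: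
`f_h(x,y) = f(x/‖x‖, y/‖y‖)` for `x, y ≠ o`, and `0` otherwise. -/
def homExt {d : ℕ} (f : Metric.sphere (0 : Euc d) 1 × Metric.sphere (0 : Euc d) 1 → ℝ)
    (p : Euc d × Euc d) : ℝ :=
  if h : p.1 ≠ 0 ∧ p.2 ≠ 0 then
    f (⟨‖p.1‖⁻¹ • p.1, by
          rw [mem_sphere_zero_iff_norm, norm_smul, norm_inv, norm_norm]
          exact inv_mul_cancel₀ (norm_ne_zero_iff.mpr h.1)⟩,
       ⟨‖p.2‖⁻¹ • p.2, by
          rw [mem_sphere_zero_iff_norm, norm_smul, norm_inv, norm_norm]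
          exact inv_mul_cancel₀ (norm_ne_zero_iff.mpr h.2)⟩)
  else 0

/-- The angle between two vectors: `arccos ⟪x/‖x‖, y/‖y‖⟫` for `x, y ≠ o`,
with `d_a(o,o) = 0` and `d_a(x,o) = d_a(o,x) = π/2` for `x ≠ o`. -/
def vecAngle {d : ℕ} (x y : Euc d) : ℝ :=
  if x = 0 ∧ y = 0 then 0
  else if x = 0 ∨ y = 0 then Real.pi / 2
  else Real.arccos ⟪‖x‖⁻¹ • x, ‖y‖⁻¹ • y⟫

/-- Membership in the class `F_bL`: functions on `S^{d-1} × S^{d-1}` with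
Lipschitz constant `≤ 1` (w.r.t. the Euclidean norm on `ℝ^d × ℝ^d`) and
sup-norm `≤ 1`. -/
def memFbL {d : ℕ} (f : Metric.sphere (0 : Euc d) 1 × Metric.sphere (0 : Euc d) 1 → ℝ) : Prop :=
  (∀ a b, |f a - f b| ≤
    Real.sqrt (‖(a.1 : Euc d) - (b.1 : Euc d)‖ ^ 2 + ‖(a.2 : Euc d) - (b.2 : Euc d)‖ ^ 2)) ∧
  ∀ a, |f a| ≤ 1

lemma exists_proj {d : ℕ} {C : Set (Euc d)} (hcl : IsClosed C) (hne : C.Nonempty)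
    (x : Euc d) : ∃ y ∈ C, ∀ z ∈ C, dist x y ≤ dist x z := by
  obtain ⟨y, hy, hEq⟩ := hcl.exists_infDist_eq_dist hne x
  exact ⟨y, hy, fun z hz => hEq ▸ Metric.infDist_le_dist_of_mem hz⟩

lemma metricProj_spec {d : ℕ} {C : Set (Euc d)} (hcl : IsClosed C) (hne : C.Nonempty)
    (x : Euc d) : metricProj C x ∈ C ∧ ∀ z ∈ C, dist x (metricProj C x) ≤ dist x z := by
  have h := exists_proj hcl hne x
  rw [metricProj, dif_pos h]
  exact h.choose_spec

lemma cone_zero_mem {d : ℕ} {C : Set (Euc d)} (hC : IsClosedConvexCone C) : (0 : Euc d) ∈ C := by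
  obtain ⟨⟨y, hy⟩, _, _, hcone⟩ := hC
  simpa using hcone y hy 0 le_rfl

lemma metricProj_inner {d : ℕ} {C : Set (Euc d)} (hC : IsClosedConvexCone C) (x : Euc d) :
    ⟪x - metricProj C x, metricProj C x⟫ = 0 := by
  obtain ⟨hne, hcl, hconv, hcone⟩ := hC
  obtain ⟨hpmem, hpmin⟩ := metricProj_spec hcl hne x
  set p := metricProj C x with hp
  by_cases hp0 : p = 0
  · simp [hp0]
  have key : ∀ r : ℝ, 0 ≤ r → ‖x - p‖ ^ 2 ≤ ‖x - r • p‖ ^ 2 := by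
    intro r hr
    have := hpmin (r • p) (hcone p hpmem r hr)
    rw [dist_eq_norm, dist_eq_norm] at this
    exact pow_le_pow_left₀ (norm_nonneg _) this 2
  set a := ‖p‖ ^ 2 with ha
  set b := ⟪x, p⟫ with hb
  have hpn : 0 < ‖p‖ := norm_pos_iff.mpr hp0
  have ha0 : 0 < a := by positivity
  have expand : ∀ r : ℝ, ‖x - r • p‖ ^ 2 = ‖x‖ ^ 2 - 2 * r * b + r ^ 2 * a := by
    intro r
    rw [@norm_sub_sq_real, real_inner_smul_right, norm_smul, Real.norm_eq_abs, mul_pow, sq_abs]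
    ring
  have key' : ∀ r : ℝ, 0 ≤ r → ‖x‖ ^ 2 - 2 * b + a ≤ ‖x‖ ^ 2 - 2 * r * b + r ^ 2 * a := by
    intro r hr
    have h1 := key r hr
    rw [expand r] at h1
    have e1 : ‖x - p‖ ^ 2 = ‖x‖ ^ 2 - 2 * b + a := by
      rw [show x - p = x - (1:ℝ) • p by rw [one_smul], expand 1]; ring
    linarith
  have hb0 : 0 ≤ b := by
    have := key' 0 le_rfl
    nlinarith
  have hab : a = b := by
    have h := key' (b / a) (by positivity)
    have hr : b / a * a = b := div_mul_cancel₀ b ha0.ne'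
    have h2 := mul_le_mul_of_nonneg_left h ha0.le
    nlinarith [hr, sq_nonneg (a - b), mul_le_mul_of_nonneg_left hr.le hb0]
  rw [inner_sub_left, real_inner_self_eq_norm_sq]
  rw [← hb, ← ha, hab]
  ring

lemma norm_metricProj_le {d : ℕ} {C : Set (Euc d)} (hC : IsClosedConvexCone C) (x : Euc d) :
    ‖metricProj C x‖ ≤ ‖x‖ := by
  have h := metricProj_inner hC x
  set p := metricProj C x
  have : ‖x‖ ^ 2 = ‖x - p‖ ^ 2 + ‖p‖ ^ 2 := by
    have : x = (x - p) + p := by abel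
    nth_rewrite 1 [this]
    rw [@norm_add_sq_real, h]; ring
  nlinarith [norm_nonneg (x - p), norm_nonneg p, norm_nonneg x]

lemma norm_sub_metricProj_sq {d : ℕ} {C : Set (Euc d)} (hC : IsClosedConvexCone C) (x : Euc d) :
    ‖x - metricProj C x‖ ^ 2 = ‖x‖ ^ 2 - ‖metricProj C x‖ ^ 2 := by
  have h := metricProj_inner hC x
  set p := metricProj C x
  have hx : x = (x - p) + p := by abel
  nth_rewrite 2 [hx]
  rw [@norm_add_sq_real, h]; ring

lemma key_infDist {d : ℕ} {C : Set (Euc d)} (hC : IsClosedConvexCone C) {R l : ℝ}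
    (hR : 0 < R) (hl0 : 0 ≤ l) {x : Euc d} (hx : angDist C x ≤ l) (hxR : ‖x‖ ≤ R) :
    Metric.infDist x (C ∩ Metric.closedBall (0 : Euc d) R) ≤ R * l := by
  by_cases hx0 : x = 0
  · have h0 : (0 : Euc d) ∈ C ∩ Metric.closedBall (0 : Euc d) R :=
      ⟨cone_zero_mem hC, by simp [hR.le]⟩
    calc Metric.infDist x _ ≤ dist x 0 := Metric.infDist_le_dist_of_mem h0
      _ = 0 := by simp [hx0]
      _ ≤ R * l := by positivity
  · set p := metricProj C x with hp
    have hpmem : p ∈ C := (metricProj_spec hC.2.1 hC.1 x).1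
    have hpn : ‖p‖ ≤ ‖x‖ := norm_metricProj_le hC x
    have hmem : p ∈ C ∩ Metric.closedBall (0 : Euc d) R :=
      ⟨hpmem, by simpa [dist_eq_norm] using hpn.trans hxR⟩
    have hxn : (0:ℝ) < ‖x‖ := norm_pos_iff.mpr hx0
    set t := ‖p‖ / ‖x‖ with ht
    have ht0 : 0 ≤ t := by positivity
    have ht1 : t ≤ 1 := (div_le_one hxn).mpr hpn
    have harc : Real.arccos t ≤ l := by
      rw [angDist, if_neg hx0] at hx; exact hx
    have hnorm : ‖x - p‖ = ‖x‖ * Real.sqrt (1 - t ^ 2) := by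
      rw [← Real.sqrt_sq (norm_nonneg (x - p)), norm_sub_metricProj_sq hC x]
      rw [← Real.sqrt_sq hxn.le, ← Real.sqrt_mul (sq_nonneg _)]
      congr 1
      have : t ^ 2 = ‖p‖ ^ 2 / ‖x‖ ^ 2 := by rw [ht, div_pow]
      rw [this]
      field_simp
      rw [Real.sq_sqrt (sq_nonneg _)]
    have hsin : Real.sqrt (1 - t ^ 2) = Real.sin (Real.arccos t) := (Real.sin_arccos t).symm
    calc Metric.infDist x (C ∩ Metric.closedBall (0 : Euc d) R)
        ≤ dist x p := Metric.infDist_le_dist_of_mem hmem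
      _ = ‖x - p‖ := dist_eq_norm x p
      _ = ‖x‖ * Real.sin (Real.arccos t) := by rw [hnorm, hsin]
      _ ≤ ‖x‖ * Real.arccos t :=
          mul_le_mul_of_nonneg_left (Real.sin_le (Real.arccos_nonneg t)) hxn.le
      _ ≤ R * l := mul_le_mul hxR harc (Real.arccos_nonneg t) hR.le


/-- For closed convex cones `C, D` of positive dimension and
`R > 0`, the Euclidean Hausdorff distance of the truncated cones satisfies
`δ(C ∩ B_R, D ∩ B_R) ≤ R · δ_a(C,D)`. -/
theorem hausdorffDist_inter_closedBall_le {d : ℕ} (hd : 2 ≤ d) (C D : Set (Euc d))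
    (hC : IsClosedConvexCone C) (hCp : PosDim C)
    (hD : IsClosedConvexCone D) (hDp : PosDim D)
    (R : ℝ) (hR : 0 < R) :
    Metric.hausdorffDist (C ∩ Metric.closedBall (0 : Euc d) R)
        (D ∩ Metric.closedBall (0 : Euc d) R) ≤ R * angHaus C D := by
  set S := {l : ℝ | 0 ≤ l ∧ C ⊆ angParallel D l ∧ D ⊆ angParallel C l} with hS
  have half_mem : ∀ (E F : Set (Euc d)), IsClosedConvexCone F → E ⊆ angParallel F (Real.pi / 2) := by
    intro E F hF x _
    show angDist F x ≤ Real.pi / 2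
    rw [angDist]
    split_ifs with h
    · exact le_rfl
    · exact Real.arccos_le_pi_div_two.mpr (by positivity)
  have hpi : Real.pi / 2 ∈ S :=
    ⟨by positivity, half_mem C D hD, half_mem D C hC⟩
  have main : ∀ l ∈ S, Metric.hausdorffDist (C ∩ Metric.closedBall (0 : Euc d) R)
      (D ∩ Metric.closedBall (0 : Euc d) R) ≤ R * l := by
    rintro l ⟨hl0, hCD, hDC⟩
    apply Metric.hausdorffDist_le_of_infDist (by positivity)
    · rintro x ⟨hxC, hxB⟩
      exact key_infDist hD hR hl0 (hCD hxC) (by simpa [dist_eq_norm] using hxB)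
    · rintro x ⟨hxD, hxB⟩
      exact key_infDist hC hR hl0 (hDC hxD) (by simpa [dist_eq_norm] using hxB)
  have hdiv : Metric.hausdorffDist (C ∩ Metric.closedBall (0 : Euc d) R)
      (D ∩ Metric.closedBall (0 : Euc d) R) / R ≤ sInf S :=
    le_csInf ⟨_, hpi⟩ fun l hl => (div_le_iff₀ hR).mpr (by rw [mul_comm]; exact main l hl)
  rw [angHaus, mul_comm]
  exact (div_le_iff₀ hR).mp hdiv
end
end

section
/- Let d ≥ 2 and let C ∈ C^d_* be a closed convex cone of positive dimension. If (μ_k)_{k=1}^d and (μ'_k)_{k=1}^d are two families of finite measures on the biconic σ-algebra such that Σ_{k=1}^d g_k(λ)·μ_k(η) = Σ_{k=1}^d g_k(λ)·μ'_k(η) for all 0 ≤ λ < π/2 and all η in the biconic σ-algebra, then μ_k = μ'_k for k = 1, …, d. In particular, the conic support measures Ω_1(C,·), …, Ω_d(C,·) satisfying the conic Steiner formula γ_d(M_λ^a(C,η)) = Σ_{k=1}^d g_k(λ)·Ω_k(C,η) are uniquely determined. -/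
open Set MeasureTheory
open scoped RealInnerProductSpace ENNReal NNReal

attribute [local instance] Classical.propDecidable

noncomputable section

lemma sphVol_pos {n : ℕ} (hn : 1 ≤ n) : 0 < sphVol n := by
  have h2 : (0:ℝ) < (n:ℝ) / 2 := by positivity
  exact div_pos (by positivity) (Real.Gamma_pos_of_pos h2)

lemma sphVol_nonneg (n : ℕ) : 0 ≤ sphVol n := by
  rcases Nat.eq_zero_or_pos n with h | h
  · subst h; simp [sphVol, Real.Gamma_zero]
  · exact (sphVol_pos h).le

lemma gcoef_nonneg {d k : ℕ} {l : ℝ} (h0 : 0 ≤ l) (h1 : l ≤ Real.pi / 2) :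
    0 ≤ gcoef d k l := by
  unfold gcoef
  split
  · norm_num
  · refine mul_nonneg (div_nonneg (mul_nonneg (sphVol_nonneg _) (sphVol_nonneg _))
      (sphVol_nonneg _)) ?_
    refine intervalIntegral.integral_nonneg h0 fun t ht => ?_
    have hpi := Real.pi_pos
    refine mul_nonneg (pow_nonneg ?_ _) (pow_nonneg ?_ _)
    · exact Real.cos_nonneg_of_mem_Icc ⟨by linarith [ht.1], by linarith [ht.2]⟩
    · exact Real.sin_nonneg_of_nonneg_of_le_pi ht.1 (by linarith [ht.2])

lemma gcoef_lin_indep {d : ℕ} (hd : 2 ≤ d) (e : ℕ → ℝ)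
    (h : ∀ l : ℝ, 0 ≤ l → l < Real.pi / 2 →
      ∑ j ∈ Finset.Icc 1 d, gcoef d j l * e j = 0) :
    ∀ j ∈ Finset.Icc 1 d, e j = 0 := by
  have hpi := Real.pi_pos
  -- split off the top index
  have hins : Finset.Icc 1 d = insert d (Finset.Icc 1 (d - 1)) := by
    ext j; simp only [Finset.mem_Icc, Finset.mem_insert]; omega
  have hdnot : d ∉ Finset.Icc 1 (d - 1) := by simp only [Finset.mem_Icc]; omega
  -- evaluate at 0 : e d = 0
  have hed : e d = 0 := by
    have h0 := h 0 le_rfl (by positivity)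
    have : ∀ j ∈ Finset.Icc 1 d, gcoef d j 0 * e j
        = (if j = d then e j else 0) := by
      intro j hj
      unfold gcoef
      split
      · simp_all
      · simp_all [intervalIntegral.integral_same]
    rw [Finset.sum_congr rfl this, Finset.sum_ite_eq' (Finset.Icc 1 d) d e,
      if_pos (by simp only [Finset.mem_Icc]; omega)] at h0
    exact h0
  set cc : ℕ → ℝ := fun j => sphVol j * sphVol (d - j) / sphVol d with hcc
  set F : ℝ → ℝ := fun l => ∑ j ∈ Finset.Icc 1 (d - 1), (cc j * e j) *
      ∫ t in (0:ℝ)..l, Real.cos t ^ (j - 1) * Real.sin t ^ (d - j - 1) with hF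
  -- F vanishes on [0, π/2)
  have hF0 : ∀ l : ℝ, 0 ≤ l → l < Real.pi / 2 → F l = 0 := by
    intro l h0 h1
    have hsum := h l h0 h1
    rw [hins, Finset.sum_insert hdnot] at hsum
    have hgd : gcoef d d l = 1 := by unfold gcoef; simp
    have : ∀ j ∈ Finset.Icc 1 (d - 1), gcoef d j l * e j =
        (cc j * e j) * ∫ t in (0:ℝ)..l, Real.cos t ^ (j - 1) * Real.sin t ^ (d - j - 1) := by
      intro j hj
      simp only [Finset.mem_Icc] at hj
      unfold gcoef
      rw [if_neg (by omega)]
      ring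
    rw [Finset.sum_congr rfl this] at hsum
    rw [hgd, hed, mul_zero, zero_add] at hsum
    exact hsum
  -- derivative of F
  have hderiv : ∀ x : ℝ, HasDerivAt F
      (∑ j ∈ Finset.Icc 1 (d - 1), (cc j * e j) *
        (Real.cos x ^ (j - 1) * Real.sin x ^ (d - j - 1))) x := by
    intro x
    refine HasDerivAt.fun_sum fun j hj => ?_
    have hcont : Continuous fun t : ℝ => Real.cos t ^ (j - 1) * Real.sin t ^ (d - j - 1) := by
      continuity
    exact ((hcont.integral_hasStrictDerivAt 0 x).hasDerivAt).const_mul (cc j * e j)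
  -- derivative vanishes on (0, π/2)
  have hdzero : ∀ x : ℝ, 0 < x → x < Real.pi / 2 →
      ∑ j ∈ Finset.Icc 1 (d - 1), (cc j * e j) *
        (Real.cos x ^ (j - 1) * Real.sin x ^ (d - j - 1)) = 0 := by
    intro x hx0 hx1
    have hev : F =ᶠ[nhds x] fun _ => (0:ℝ) := by
      filter_upwards [Ioo_mem_nhds hx0 hx1] with y hy
      exact hF0 y hy.1.le hy.2
    have h2 : HasDerivAt F 0 x :=
      (hasDerivAt_const x (0:ℝ)).congr_of_eventuallyEq hev
    exact (hderiv x).unique h2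
  -- substitute x = arctan t : polynomial identity on (0, ∞)
  have hpoly : ∀ t : ℝ, 0 < t →
      ∑ j ∈ Finset.Icc 1 (d - 1), (cc j * e j) * t ^ (d - j - 1) = 0 := by
    intro t ht
    set x := Real.arctan t with hx
    have hx0 : 0 < x := by
      rw [hx, ← Real.arctan_zero]; exact Real.arctan_strictMono ht
    have hx1 : x < Real.pi / 2 := Real.arctan_lt_pi_div_two t
    have hc : (0:ℝ) < Real.cos x := Real.cos_arctan_pos t
    have hsin : Real.sin x = t * Real.cos x := by
      rw [hx, Real.sin_arctan, Real.cos_arctan]; ring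
    have hkey := hdzero x hx0 hx1
    have hterm : ∀ j ∈ Finset.Icc 1 (d - 1),
        (cc j * e j) * (Real.cos x ^ (j - 1) * Real.sin x ^ (d - j - 1)) =
        ((cc j * e j) * t ^ (d - j - 1)) * Real.cos x ^ (d - 2) := by
      intro j hj
      simp only [Finset.mem_Icc] at hj
      rw [hsin, mul_pow]
      have hexp : (j - 1) + (d - j - 1) = d - 2 := by omega
      rw [← hexp, pow_add]
      ring
    rw [Finset.sum_congr rfl hterm, ← Finset.sum_mul] at hkey
    have hcpow : Real.cos x ^ (d - 2) ≠ 0 := pow_ne_zero _ hc.ne'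
    exact (mul_eq_zero.1 hkey).resolve_right hcpow
  -- the corresponding polynomial is zero
  set P : Polynomial ℝ := ∑ j ∈ Finset.Icc 1 (d - 1),
      Polynomial.C (cc j * e j) * Polynomial.X ^ (d - j - 1) with hP
  have hPzero : P = 0 := by
    refine Polynomial.eq_zero_of_infinite_isRoot P ?_
    refine Set.Infinite.mono ?_ (Set.Ioi_infinite (0:ℝ))
    intro t ht
    simp only [Set.mem_setOf_eq, Polynomial.IsRoot, hP, Polynomial.eval_finset_sum,
      Polynomial.eval_mul, Polynomial.eval_C, Polynomial.eval_pow, Polynomial.eval_X]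
    exact hpoly t ht
  -- extract coefficients
  have hcoef : ∀ j0 ∈ Finset.Icc 1 (d - 1), cc j0 * e j0 = 0 := by
    intro j0 hj0
    have hj0' := Finset.mem_Icc.1 hj0
    have := congrArg (fun q => Polynomial.coeff q (d - j0 - 1)) hPzero
    simp only [hP, Polynomial.finset_sum_coeff, Polynomial.coeff_C_mul_X_pow,
      Polynomial.coeff_zero] at this
    rwa [Finset.sum_eq_single_of_mem j0 hj0
      (fun j hj hne => by
        have := Finset.mem_Icc.1 hj
        rw [if_neg (by omega)]), if_pos rfl] at this
  intro j hj
  have hj' := Finset.mem_Icc.1 hj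
  rcases eq_or_ne j d with rfl | hne
  · exact hed
  · have hjm : j ∈ Finset.Icc 1 (d - 1) := Finset.mem_Icc.2 ⟨hj'.1, by omega⟩
    have hccpos : 0 < cc j := by
      rw [hcc]
      exact div_pos (mul_pos (sphVol_pos hj'.1) (sphVol_pos (by omega)))
        (sphVol_pos (by omega))
    have := hcoef j hjm
    rcases mul_eq_zero.1 this with h' | h'
    · exact absurd h' hccpos.ne'
    · exact h'

lemma biconic_measures_unique {d : ℕ} (hd : 2 ≤ d)
    (μ μ' : ℕ → @Measure (Euc d × Euc d) (biconicMS d))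
    (hμ : ∀ k, μ k Set.univ ≠ ⊤) (hμ' : ∀ k, μ' k Set.univ ≠ ⊤)
    (h : ∀ l : ℝ, 0 ≤ l → l < Real.pi / 2 →
      ∀ η : Set (Euc d × Euc d), MeasurableSet[biconicMS d] η →
        ∑ k ∈ Finset.Icc 1 d, ENNReal.ofReal (gcoef d k l) * μ k η =
        ∑ k ∈ Finset.Icc 1 d, ENNReal.ofReal (gcoef d k l) * μ' k η) :
    ∀ k ∈ Finset.Icc 1 d, μ k = μ' k := by
  intro k hk
  refine @Measure.ext _ (biconicMS d) _ _ fun η hη => ?_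
  have hfin : ∀ j, μ j η ≠ ⊤ := fun j =>
    ne_top_of_le_ne_top (hμ j) (measure_mono (subset_univ η))
  have hfin' : ∀ j, μ' j η ≠ ⊤ := fun j =>
    ne_top_of_le_ne_top (hμ' j) (measure_mono (subset_univ η))
  set e : ℕ → ℝ := fun j => (μ j η).toReal - (μ' j η).toReal with he
  have hreal : ∀ l : ℝ, 0 ≤ l → l < Real.pi / 2 →
      ∑ j ∈ Finset.Icc 1 d, gcoef d j l * e j = 0 := by
    intro l h0 h1
    have heq := congrArg ENNReal.toReal (h l h0 h1 η hη)
    rw [ENNReal.toReal_sum (fun j _ => ENNReal.mul_ne_top ENNReal.ofReal_ne_top (hfin j)),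
        ENNReal.toReal_sum (fun j _ => ENNReal.mul_ne_top ENNReal.ofReal_ne_top (hfin' j))]
      at heq
    simp only [ENNReal.toReal_mul, ENNReal.toReal_ofReal (gcoef_nonneg h0 h1.le)] at heq
    simp only [he, mul_sub, Finset.sum_sub_distrib, heq, sub_self]
  have hek := gcoef_lin_indep hd e hreal k hk
  have htr : (μ k η).toReal = (μ' k η).toReal := by
    have h0 : (μ k η).toReal - (μ' k η).toReal = 0 := hek
    linarith
  exact (ENNReal.toReal_eq_toReal_iff' (hfin k) (hfin' k)).1 htr

/-- Uniqueness in the conic Steiner formula.  If two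
families `(μ_k)`, `(μ'_k)` of finite measures on the biconic σ-algebra
satisfy `Σ_{k=1}^d g_k(λ) μ_k(η) = Σ_{k=1}^d g_k(λ) μ'_k(η)` for all
`0 ≤ λ < π/2` and all biconic `η`, then `μ_k = μ'_k` for `k = 1, …, d`.  In
particular, measures satisfying the conic Steiner formula
`γ_d(M_λ^a(C,η)) = Σ_{k=1}^d g_k(λ) Ω_k(C,η)` are uniquely determined. -/
theorem conicSupportMeasures_unique {d : ℕ} (hd : 2 ≤ d) (C : Set (Euc d))
    (hC : IsClosedConvexCone C) (hCp : PosDim C)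
    (μ μ' : ℕ → @Measure (Euc d × Euc d) (biconicMS d))
    (hμ : ∀ k, μ k Set.univ ≠ ⊤) (hμ' : ∀ k, μ' k Set.univ ≠ ⊤)
    (h : ∀ l : ℝ, 0 ≤ l → l < Real.pi / 2 →
      ∀ η : Set (Euc d × Euc d), MeasurableSet[biconicMS d] η →
        ∑ k ∈ Finset.Icc 1 d, ENNReal.ofReal (gcoef d k l) * μ k η =
        ∑ k ∈ Finset.Icc 1 d, ENNReal.ofReal (gcoef d k l) * μ' k η) :
    (∀ k ∈ Finset.Icc 1 d, μ k = μ' k) ∧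
    ∀ Ω Ω' : ℕ → @Measure (Euc d × Euc d) (biconicMS d),
      (∀ k, Ω k Set.univ ≠ ⊤) → (∀ k, Ω' k Set.univ ≠ ⊤) →
      (∀ l : ℝ, 0 ≤ l → l < Real.pi / 2 →
        ∀ η : Set (Euc d × Euc d), MeasurableSet[biconicMS d] η →
          stdGaussian d (angLocParallel C l η) =
            ∑ k ∈ Finset.Icc 1 d, ENNReal.ofReal (gcoef d k l) * Ω k η) →
      (∀ l : ℝ, 0 ≤ l → l < Real.pi / 2 →
        ∀ η : Set (Euc d × Euc d), MeasurableSet[biconicMS d] η →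
          stdGaussian d (angLocParallel C l η) =
            ∑ k ∈ Finset.Icc 1 d, ENNReal.ofReal (gcoef d k l) * Ω' k η) →
      ∀ k ∈ Finset.Icc 1 d, Ω k = Ω' k := by
  constructor
  · exact biconic_measures_unique hd μ μ' hμ hμ' h
  · intro Ω Ω' hΩf hΩ'f hΩ hΩ'
    exact biconic_measures_unique hd Ω Ω' hΩf hΩ'f fun l h0 h1 η hη =>
      (hΩ l h0 h1 η hη).symm.trans (hΩ' l h0 h1 η hη)
end
end

section
/- Let d ≥ 2. The d−1 functions g_1, …, g_{d−1} together with the constant function 1, where g_k(λ) = (ω_k ω_{d−k}/ω_d) ∫₀^λ cos^{k−1}φ sin^{d−k−1}φ dφ for 1 ≤ k ≤ d−1, are linearly independent as functions on the interval [0,1]: if c_0 + Σ_{k=1}^{d−1} c_k g_k(λ) = 0 for all λ ∈ [0,1], then c_0 = c_1 = … = c_{d−1} = 0. -/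
open Set MeasureTheory
open scoped RealInnerProductSpace ENNReal NNReal

attribute [local instance] Classical.propDecidable

noncomputable section

lemma sphVol_pos' {j : ℕ} (hj : 1 ≤ j) : 0 < sphVol j := by
  unfold sphVol
  have h : 0 < (j:ℝ)/2 := by positivity
  have := Real.Gamma_pos_of_pos h
  positivity

lemma integral_zero_fun {f : ℝ → ℝ} (hf : Continuous f)
    (h : ∀ x ∈ Set.Icc (0:ℝ) 1, ∫ t in (0:ℝ)..x, f t = 0) :
    ∀ x ∈ Set.Ioo (0:ℝ) 1, f x = 0 := by
  intro x hx
  have h1 : HasDerivAt (fun u => ∫ t in (0:ℝ)..u, f t) (f x) x :=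
    intervalIntegral.integral_hasDerivAt_right (hf.intervalIntegrable _ _)
      hf.aestronglyMeasurable.stronglyMeasurableAtFilter hf.continuousAt
  have h2 : HasDerivAt (fun u => ∫ t in (0:ℝ)..u, f t) 0 x := by
    refine (hasDerivAt_const x ((0:ℝ))).congr_of_eventuallyEq ?_
    filter_upwards [Ioo_mem_nhds hx.1 hx.2] with y hy
    exact h y (Set.Ioo_subset_Icc_self hy)
  linarith [h1.unique h2]

/-- The functions `1, g_1, …, g_{d−1}` are linearly
independent on `[0,1]`: if `c_0 + Σ_{k=1}^{d−1} c_k g_k(λ) = 0` for all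
`λ ∈ [0,1]`, then `c_0 = c_1 = … = c_{d−1} = 0`. -/
theorem gcoef_linearIndependent {d : ℕ} (hd : 2 ≤ d) (c : ℕ → ℝ)
    (h : ∀ l ∈ Set.Icc (0:ℝ) 1,
      c 0 + ∑ k ∈ Finset.Icc 1 (d - 1), c k * gcoef d k l = 0) :
    ∀ k ≤ d - 1, c k = 0 := by
  set a : ℕ → ℝ := fun k => sphVol k * sphVol (d - k) / sphVol d with ha
  have hkd : ∀ k ∈ Finset.Icc 1 (d-1), k ≠ d := by
    intro k hk; simp only [Finset.mem_Icc] at hk; omega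
  -- c 0 = 0
  have hc0 : c 0 = 0 := by
    have := h 0 ⟨le_refl _, by norm_num⟩
    have hz : ∀ k ∈ Finset.Icc 1 (d-1), c k * gcoef d k 0 = 0 := by
      intro k hk
      simp [gcoef, hkd k hk, intervalIntegral.integral_same]
    rw [Finset.sum_eq_zero hz] at this
    linarith
  -- the integrand sum vanishes
  set f : ℝ → ℝ := fun t => ∑ k ∈ Finset.Icc 1 (d-1),
      c k * a k * (Real.cos t ^ (k - 1) * Real.sin t ^ (d - k - 1)) with hf
  have hfc : Continuous f := by
    apply continuous_finset_sum
    intro k _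
    exact continuous_const.mul ((Real.continuous_cos.pow _).mul (Real.continuous_sin.pow _))
  have hint : ∀ l ∈ Set.Icc (0:ℝ) 1, ∫ t in (0:ℝ)..l, f t = 0 := by
    intro l hl
    have := h l hl
    rw [hc0, zero_add] at this
    calc ∫ t in (0:ℝ)..l, f t
        = ∑ k ∈ Finset.Icc 1 (d-1), c k * gcoef d k l := by
          rw [hf, intervalIntegral.integral_finset_sum (fun k _ => (show Continuous fun t => c k * a k * (Real.cos t ^ (k - 1) * Real.sin t ^ (d - k - 1)) from continuous_const.mul
            ((Real.continuous_cos.pow _).mul (Real.continuous_sin.pow _))).intervalIntegrable _ _)]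
          refine Finset.sum_congr rfl fun k hk => ?_
          rw [intervalIntegral.integral_const_mul]
          simp only [gcoef, if_neg (hkd k hk), ha]
          ring
      _ = 0 := this
  have hf0 : ∀ x ∈ Set.Ioo (0:ℝ) 1, f x = 0 := integral_zero_fun hfc hint
  -- polynomial
  set p : Polynomial ℝ := ∑ k ∈ Finset.Icc 1 (d-1),
      Polynomial.C (c k * a k) * Polynomial.X ^ (d - k - 1) with hp
  have hroot : ∀ x ∈ Set.Ioo (0:ℝ) 1, p.IsRoot (Real.tan x) := by
    intro x hx
    have hcos : 0 < Real.cos x := by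
      apply Real.cos_pos_of_mem_Ioo
      constructor <;> nlinarith [Real.pi_gt_three, hx.1, hx.2]
    have hkey : p.eval (Real.tan x) * Real.cos x ^ (d - 2) = f x := by
      rw [hp, hf, Polynomial.eval_finset_sum, Finset.sum_mul]
      refine Finset.sum_congr rfl fun k hk => ?_
      simp only [Polynomial.eval_mul, Polynomial.eval_C, Polynomial.eval_pow, Polynomial.eval_X]
      simp only [Finset.mem_Icc] at hk
      have hsplit : Real.cos x ^ (d - 2) = Real.cos x ^ (k - 1) * Real.cos x ^ (d - k - 1) := by
        rw [← pow_add]; congr 1; omega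
      rw [Real.tan_eq_sin_div_cos, div_pow, hsplit]
      field_simp
    have := hf0 x hx
    rw [← hkey] at this
    have hcd : Real.cos x ^ (d - 2) ≠ 0 := by positivity
    exact (mul_eq_zero.1 this).resolve_right hcd
  have hpzero : p = 0 := by
    apply Polynomial.eq_zero_of_infinite_isRoot
    have hinj : Set.InjOn Real.tan (Set.Ioo (0:ℝ) 1) := by
      apply Real.injOn_tan.mono
      intro y hy
      constructor <;> nlinarith [Real.pi_gt_three, hy.1, hy.2]
    have hinf : (Real.tan '' Set.Ioo (0:ℝ) 1).Infinite :=
      Set.Infinite.image hinj (Set.Ioo_infinite (by norm_num : (0:ℝ) < 1))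
    refine hinf.mono ?_
    rintro _ ⟨x, hx, rfl⟩
    exact hroot x hx
  -- extract coefficients
  intro k hk
  rcases Nat.eq_zero_or_pos k with rfl | hk1
  · exact hc0
  have hka : p.coeff (d - k - 1) = c k * a k := by
    rw [hp, Polynomial.finset_sum_coeff]
    rw [Finset.sum_eq_single k]
    · rw [Polynomial.coeff_C_mul, Polynomial.coeff_X_pow, if_pos rfl, mul_one]
    · intro j hj hjk
      simp only [Finset.mem_Icc] at hj
      rw [Polynomial.coeff_C_mul, Polynomial.coeff_X_pow, if_neg (by omega), mul_zero]
    · intro hkn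
      exact absurd (Finset.mem_Icc.2 ⟨hk1, hk⟩) hkn
  have hapos : 0 < a k := by
    rw [ha]
    have h1 := sphVol_pos' hk1
    have h2 := sphVol_pos' (j := d - k) (by omega)
    have h3 := sphVol_pos' (j := d) (by omega)
    positivity
  rw [hpzero] at hka
  simp only [Polynomial.coeff_zero] at hka
  exact (mul_eq_zero.1 hka.symm).resolve_right hapos.ne'
end
end
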